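/- Let D be a noncommutative division ring of characteristic 2, let n ≥ 2 be an integer, and let f : D → D be an additive map such that f(x) = xⁿ · f(x⁻¹) for all nonzero x ∈ D. If f(a²) = 0 for all a ∈ D, then f = 0. -/

import Mathlib

open Polynomial

set_option maxHeartbeats 1000000 in
theorem stmt_7 {D : Type*} [DivisionRing D] [CharP D 2]
    (hnc : ∃ a b : D, a * b ≠ b * a)
    (n : ℕ) (hn : 2 ≤ n)
    (f : D → D)
    (hf : ∀ x y : D, f (x + y) = f x + f y)
    (h : ∀ x : D, x ≠ 0 → f x = x ^ n * f x⁻¹)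
    (hsq : ∀ a : D, f (a ^ 2) = 0) :
    f = 0 := by
  classical
  have h2 : ∀ z : D, z + z = 0 := fun z => CharTwo.add_self_eq_zero z
  have hadd_eq : ∀ u v : D, u + v = 0 → u = v := by
    intro u v huv
    calc u = u + (v + v) := by rw [h2, add_zero]
    _ = (u + v) + v := by rw [add_assoc]
    _ = v := by rw [huv, zero_add]
  have hf0 : f 0 = 0 := by
    have h00 : f 0 + f 0 = f 0 + 0 := by rw [← hf, add_zero, add_zero]
    exact add_left_cancel h00
  have hsq' : ∀ a : D, f (a * a) = 0 := by
    intro a; rw [← pow_two]; exact hsq a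
  have hf1 : f 1 = 0 := by
    have := hsq' 1; rwa [one_mul] at this
  have hI1 : ∀ u v : D, f (u * v) = f (v * u) := by
    intro u v
    have e1 : (u + v) * (u + v) = u * u + (u * v + (v * u + v * v)) := by noncomm_ring
    have h0 : f (u*u) + (f (u*v) + (f (v*u) + f (v*v))) = 0 := by
      rw [← hf, ← hf, ← hf, ← e1]; exact hsq' (u+v)
    rw [hsq', hsq', zero_add, add_zero] at h0
    exact hadd_eq _ _ h0
  have hI3 : ∀ x v : D, f (x * (x * v)) + f (x * v * x) = 0 := by
    intro x v
    have e1 : (x + x*v) * (x + x*v) = x*x + (x*(x*v) + (x*v*x + (x*v)*(x*v))) := by noncomm_ring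
    have h0 : f (x*x) + (f (x*(x*v)) + (f (x*v*x) + f ((x*v)*(x*v)))) = 0 := by
      rw [← hf, ← hf, ← hf, ← e1]; exact hsq' _
    rwa [hsq', hsq', zero_add, add_zero] at h0
  have hI4 : ∀ y s v : D, f (y*(s*v) + y*(v*s)) = f (s*(y*v)) + f (s*v*y) := by
    intro y s v
    have e1 : (y+s) * ((y+s)*v) = y*(y*v) + (y*(s*v) + (s*(y*v) + s*(s*v))) := by noncomm_ring
    have e2 : (y+s) * v * (y+s) = y*v*y + (y*(v*s) + (s*v*y + s*v*s)) := by noncomm_ring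
    have h0 := hI3 (y+s) v
    rw [e1, e2, hf, hf, hf, hf, hf, hf] at h0
    have p1 := hI3 y v
    have p2 := hI3 s v
    have hre : (f (y*(y*v)) + (f (y*(s*v)) + (f (s*(y*v)) + f (s*(s*v))))) + (f (y*v*y) + (f (y*(v*s)) + (f (s*v*y) + f (s*v*s))))
      = ((f (y*(y*v)) + f (y*v*y)) + (f (s*(s*v)) + f (s*v*s))) + ((f (y*(s*v)) + f (y*(v*s))) + (f (s*(y*v)) + f (s*v*y))) := by abel
    rw [hre, p1, p2, zero_add, zero_add] at h0
    rw [hf]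
    exact hadd_eq _ _ h0
  have hinv2 : ∀ x : D, x ≠ 0 → f x⁻¹ = (x⁻¹)^n * f x := by
    intro x hx
    have := h x⁻¹ (inv_ne_zero hx)
    rwa [inv_inv] at this
  have hconj : ∀ (z a : D), a ≠ 0 → f (a⁻¹ * z * a) = f z := by
    intro z a ha
    calc f (a⁻¹ * z * a) = f (a * (a⁻¹ * z)) := hI1 (a⁻¹ * z) a
    _ = f z := by rw [← mul_assoc, mul_inv_cancel₀ ha, one_mul]
  have hconjpow : ∀ (a z : D), a ≠ 0 → ∀ m : ℕ, (a⁻¹ * z * a)^m = a⁻¹ * z^m * a := by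
    intro a z ha m
    induction m with
    | zero => simp [inv_mul_cancel₀ ha]
    | succ k ih =>
      calc (a⁻¹*z*a)^(k+1) = (a⁻¹*z^k*a) * (a⁻¹*z*a) := by rw [pow_succ, ih]
      _ = a⁻¹*z^(k+1)*a := by
          rw [pow_succ]
          simp only [mul_assoc, mul_inv_cancel_left₀ ha]
  have hcent : ∀ y : D, f y ≠ 0 → ∀ a : D, y^n * a = a * y^n := by
    intro y hy a
    rcases eq_or_ne a 0 with rfl | ha
    · simp
    have hy0 : y ≠ 0 := fun h0 => hy (h0 ▸ hf0)
    set t := a⁻¹ * y * a with ht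
    have ht0 : t ≠ 0 := by
      simp [ht, mul_ne_zero, inv_ne_zero, ha, hy0]
    have htinv : t⁻¹ = a⁻¹ * y⁻¹ * a := by
      rw [ht]; simp [mul_inv_rev, inv_inv, mul_assoc]
    have key : f y = (y^n * (t⁻¹)^n) * f y := by
      calc f y = y^n * f y⁻¹ := h y hy0
      _ = y^n * f t⁻¹ := by rw [htinv, hconj _ _ ha]
      _ = y^n * ((t⁻¹)^n * f t) := by rw [hinv2 t ht0]
      _ = y^n * ((t⁻¹)^n * f y) := by rw [ht, hconj _ _ ha]
      _ = (y^n * (t⁻¹)^n) * f y := by rw [mul_assoc]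
    have hz : (y^n * (t⁻¹)^n - 1) * f y = 0 := by
      rw [sub_mul, one_mul, ← key, sub_self]
    have hC : y^n * (t⁻¹)^n = 1 := by
      rcases mul_eq_zero.mp hz with hc | hc
      · exact sub_eq_zero.mp hc
      · exact absurd hc hy
    have hyt : y^n = t^n := by
      have htn : t^n ≠ 0 := pow_ne_zero n ht0
      calc y^n = y^n * ((t⁻¹)^n * t^n) := by
            rw [inv_pow, inv_mul_cancel₀ htn, mul_one]
      _ = (y^n * (t⁻¹)^n) * t^n := by rw [mul_assoc]
      _ = t^n := by rw [hC, one_mul]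
    have hcp := hconjpow a y ha n
    rw [← ht] at hcp
    rw [hcp] at hyt
    calc y^n * a = a * (a⁻¹ * y^n * a) := by
          simp only [← mul_assoc, mul_inv_cancel₀ ha, one_mul]
    _ = a * y^n := by rw [← hyt]
  -- main contradiction
  by_contra hne
  have hex0 : ∃ x : D, f x ≠ 0 := by
    by_contra hall
    push_neg at hall
    exact hne (funext fun x => by rw [hall x]; rfl)
  obtain ⟨y₀, hy₀⟩ := hex0
  have hn0 : n ≠ 0 := by omega
  set e := n.factorization 2 with he
  set r := n / 2 ^ e with hr
  have hern : 2 ^ e * r = n := Nat.ordProj_mul_ordCompl_eq_self n 2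
  have hrodd : ¬ (2 ∣ r) := Nat.not_dvd_ordCompl Nat.prime_two hn0
  have hr0 : r ≠ 0 := by
    intro h0; rw [h0, mul_zero] at hern; exact hn0 hern.symm
  by_cases hr1 : r = 1
  · -- Branch 2 : n = 2 ^ e
    have hn2e : n = 2 ^ e := by rw [← hern, hr1, mul_one]
    obtain ⟨a, b, hab⟩ := hnc
    have hy : ∃ y : D, f y ≠ 0 ∧ ∃ x, y * x ≠ x * y := by
      by_cases hc0 : ∃ x, y₀ * x ≠ x * y₀
      · exact ⟨y₀, hy₀, hc0⟩
      · push_neg at hc0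
        by_cases hfa : f a = 0
        · refine ⟨y₀ + a, ?_, ⟨b, ?_⟩⟩
          · rw [hf, hfa, add_zero]; exact hy₀
          · intro hcomm
            apply hab
            have : y₀ * b + a * b = b * y₀ + b * a := by
              rw [add_mul, mul_add] at hcomm
              exact hcomm
            rw [hc0 b] at this
            exact add_left_cancel this
        · exact ⟨a, hfa, ⟨b, hab⟩⟩
    obtain ⟨y, hfy, x₁, hx₁⟩ := hy
    set P : ℕ → Prop := fun k => ∀ x : D, y^(2^k) * x = x * y^(2^k) with hP
    have hPe : ∃ k, P k := ⟨e, by intro x; rw [← hn2e]; exact hcent y hfy x⟩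
    set k₀ := Nat.find hPe with hk₀
    have hPk₀ : P k₀ := Nat.find_spec hPe
    have hk₀0 : k₀ ≠ 0 := by
      intro h0
      have := hPk₀ x₁
      rw [h0, pow_zero, pow_one] at this
      exact hx₁ this
    set j := k₀ - 1 with hj
    have hjlt : j < k₀ := by omega
    have hnPj : ¬ P j := Nat.find_min hPe hjlt
    set Y := y^(2^j) with hY
    obtain ⟨x₀, hx₀⟩ : ∃ x : D, Y * x ≠ x * Y := by
      have hnPj' : ¬ ∀ x : D, y^(2^j) * x = x * y^(2^j) := hnPj
      push_neg at hnPj'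
      exact hnPj'
    have hYY : ∀ x : D, (Y*Y) * x = x * (Y*Y) := by
      intro x
      have hYYe : Y * Y = y ^ (2 ^ k₀) := by
        rw [hY, ← pow_add]
        congr 1
        have : j + 1 = k₀ := by omega
        rw [← this, pow_succ]
        omega
      rw [hYYe]
      exact hPk₀ x
    set c := Y*x₀ + x₀*Y with hc
    have hc0 : c ≠ 0 := by
      intro h0
      exact hx₀ (hadd_eq _ _ (h0))
    have hYc : Y * c = c * Y := by
      apply hadd_eq
      have e3 : Y*c + c*Y = ((Y*Y)*x₀ + x₀*(Y*Y)) + (Y*(x₀*Y) + Y*(x₀*Y)) := by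
        rw [hc]; noncomm_ring
      rw [e3, hYY x₀, h2, h2, add_zero]
    have hYcinv : Y * c⁻¹ = c⁻¹ * Y := ((Commute.inv_right₀ hYc) : _)
    set w := x₀ * c⁻¹ with hw
    have hw1 : Y*w + w*Y = 1 := by
      calc Y*w + w*Y = Y*x₀*c⁻¹ + x₀*(c⁻¹*Y) := by rw [hw]; noncomm_ring
      _ = Y*x₀*c⁻¹ + x₀*(Y*c⁻¹) := by rw [hYcinv]
      _ = (Y*x₀ + x₀*Y)*c⁻¹ := by noncomm_ring
      _ = 1 := by rw [← hc, mul_inv_cancel₀ hc0]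
    have hyY : y * Y = Y * y := (pow_mul_comm' y (2^j)).symm
    have hfinal : f y = 0 := by
      have k1 := hI4 y Y w
      have lhs1 : y*(Y*w) + y*(w*Y) = y := by
        rw [← mul_add, hw1, mul_one]
      rw [lhs1] at k1
      have r1 : Y*(y*w) = y*(Y*w) := by
        rw [← mul_assoc, ← hyY, mul_assoc]
      have r2 : f (Y*w*y) = f (y*(Y*w)) := hI1 (Y*w) y
      rw [r1, r2, h2] at k1
      exact k1
    exact hfy hfinal
  · -- Branch 1 : r odd ≥ 3
    have hr2 : 2 ≤ r := (Nat.two_le_iff r).mpr ⟨hr0, hr1⟩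
    set y := y₀ with hyy₀
    have hfy : f y ≠ 0 := hy₀
    have hy0 : y ≠ 0 := fun h0 => hfy (h0 ▸ hf0)
    have h1y : (1 : D) + y ≠ 0 := by
      intro h0
      have : y = 1 := by
        have h11 : (1:D) + 1 = 0 := h2 1
        have := h0.trans h11.symm
        exact add_left_cancel this
      rw [this] at hfy; exact hfy hf1
    have hyyy : y + y*y ≠ 0 := by
      have : y + y*y = y * (1 + y) := by noncomm_ring
      rw [this]
      exact mul_ne_zero hy0 h1y
    have hcomy : Commute y (1 + y) := by
      unfold Commute SemiconjBy
      noncomm_ring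
    have hkey : y⁻¹ + (1+y)⁻¹ = (y + y*y)⁻¹ := by
      have hmul : (y + y*y) * (y⁻¹ + (1+y)⁻¹) = 1 := by
        have c1 : (y + y*y) * y⁻¹ = 1 + y := by
          rw [add_mul, mul_inv_cancel₀ hy0, mul_assoc, mul_inv_cancel₀ hy0, mul_one]
        have c2 : (y + y*y) * (1+y)⁻¹ = y := by
          have e4 : y + y*y = (1+y)*y := by noncomm_ring
          have hcy : y * (1+y)⁻¹ = (1+y)⁻¹ * y := (Commute.inv_right₀ hcomy : _)
          rw [e4, mul_assoc, hcy, ← mul_assoc, mul_inv_cancel₀ h1y, one_mul]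
        rw [mul_add, c1, c2, add_assoc, h2, add_zero]
      exact eq_inv_of_mul_eq_one_right hmul
    have happ : (y⁻¹)^n * f y + ((1+y)⁻¹)^n * f y = ((y + y*y)⁻¹)^n * f y := by
      have l1 : f y⁻¹ = (y⁻¹)^n * f y := hinv2 y hy0
      have l2 : f ((1+y)⁻¹) = ((1+y)⁻¹)^n * f y := by
        rw [hinv2 (1+y) h1y, hf, hf1, zero_add]
      have l3 : f ((y + y*y)⁻¹) = ((y+y*y)⁻¹)^n * f y := by
        rw [hinv2 (y+y*y) hyyy, hf, hsq', add_zero]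
      rw [← l1, ← l2, ← l3, ← hf, hkey]
    have hA : (y⁻¹)^n + ((1+y)⁻¹)^n = ((y + y*y)⁻¹)^n := by
      have hz : ((y⁻¹)^n + ((1+y)⁻¹)^n - ((y+y*y)⁻¹)^n) * f y = 0 := by
        rw [sub_mul, add_mul, happ, sub_self]
      rcases mul_eq_zero.mp hz with hc | hc
      · exact sub_eq_zero.mp hc
      · exact absurd hc hfy
    set u := y^n with hu
    set v := (1+y)^n with hv
    have hcomuv : Commute u v := hcomy.pow_pow n n
    have hu0 : u ≠ 0 := pow_ne_zero n hy0
    have hv0 : v ≠ 0 := pow_ne_zero n h1y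
    have hA2 : u⁻¹ + v⁻¹ = (u*v)⁻¹ := by
      have e5 : y + y*y = y * (1+y) := by noncomm_ring
      have e6 : ((y + y*y)⁻¹)^n = (u*v)⁻¹ := by
        rw [e5, inv_pow, hcomy.mul_pow]
      rw [← e6, ← hA, inv_pow, inv_pow]
    have hsum : u + v = 1 := by
      have hx : (u*v) * (u⁻¹ + v⁻¹) = 1 := by
        rw [hA2, mul_inv_cancel₀ (mul_ne_zero hu0 hv0)]
      have c1 : (u*v) * u⁻¹ = v := by
        rw [hcomuv.eq, mul_assoc, mul_inv_cancel₀ hu0, mul_one]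
      have c2 : (u*v) * v⁻¹ = u := by
        rw [mul_assoc, mul_inv_cancel₀ hv0, mul_one]
      rw [mul_add, c1, c2] at hx
      rw [add_comm]; exact hx
    set w := y^(2^e) with hwdef
    have hw0 : w ≠ 0 := pow_ne_zero _ hy0
    have hfro : ∀ k : ℕ, (1 + y)^(2^k) = 1 + y^(2^k) := by
      intro k
      induction k with
      | zero => simp
      | succ k ih =>
        have : (2:ℕ)^(k+1) = 2^k * 2 := by rw [pow_succ]
        rw [this, pow_mul, pow_mul, ih]
        have sq2 : ∀ t : D, (1 + t)^2 = 1 + t^2 := by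
          intro t
          have : (1+t)*(1+t) = 1 + (t + t) + t*t := by noncomm_ring
          rw [pow_two, pow_two, this, h2, add_zero]
        exact sq2 _
    have hrelw : w^r + (1+w)^r = 1 := by
      have e7 : u = w^r := by rw [hu, ← hern, pow_mul]
      have e8 : v = (1+w)^r := by rw [hv, ← hern, pow_mul, hfro]
      rw [← e7, ← e8]; exact hsum
    -- polynomial part
    haveI : Fact (Nat.Prime 2) := ⟨Nat.prime_two⟩
    set q : (ZMod 2)[X] := X^r + (X+1)^r + 1 with hq
    have hq0 : q ≠ 0 := by
      have hrm : r % 2 = 1 := by omega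
      have hcoeff : q.coeff (r-1) = 1 := by
        rw [hq, coeff_add, coeff_add, coeff_X_pow, coeff_X_add_one_pow, coeff_one]
        have h1 : ¬ (r - 1 = r) := by omega
        have h3 : ¬ (r - 1 = 0) := by omega
        rw [if_neg h1, if_neg h3, zero_add, add_zero]
        have h4 : r.choose (r-1) = r := by
          have := Nat.choose_symm (by omega : 1 ≤ r)
          rw [this, Nat.choose_one_right]
        rw [h4, ← ZMod.natCast_mod, hrm, Nat.cast_one]
      intro hq'
      rw [hq', coeff_zero] at hcoeff
      exact one_ne_zero hcoeff.symm
    have hcomm2 : ∀ (cc : ZMod 2) (x : D), (ZMod.castHom (dvd_refl 2) D) cc * x = x * (ZMod.castHom (dvd_refl 2) D) cc := by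
      intro cc x
      rw [← ZMod.natCast_zmod_val cc, map_natCast]
      exact Nat.cast_comm _ x
    letI alg : Algebra (ZMod 2) D := RingHom.toAlgebra' (ZMod.castHom (dvd_refl 2) D) hcomm2
    have haq : Polynomial.aeval w q = 0 := by
      rw [hq]
      simp only [map_add, map_pow, map_one, Polynomial.aeval_X]
      have hrelw' : w^r + (w+1)^r = 1 := by rw [add_comm w 1]; exact hrelw
      rw [hrelw']
      exact h2 1
    have pb := AdjoinRoot.powerBasis hq0
    haveI : Finite (AdjoinRoot q) := by
      have : Finite (Fin pb.dim →₀ ZMod 2) := by infer_instance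
      exact Finite.of_injective pb.basis.repr pb.basis.repr.injective
    have main : ∀ i j : ℕ, i < j → (AdjoinRoot.root q)^i = (AdjoinRoot.root q)^j → False := by
      intro i j hlt hroot
      have hdvd : q ∣ (X : (ZMod 2)[X])^i - X^j := by
        apply AdjoinRoot.mk_eq_mk.mp
        rw [map_pow, map_pow, AdjoinRoot.mk_X, hroot]
      obtain ⟨g, hg⟩ := hdvd
      have hwe : w^i - w^j = 0 := by
        have := congrArg (Polynomial.aeval w) hg
        rw [map_sub, map_mul, map_pow, map_pow, Polynomial.aeval_X, haq, zero_mul] at this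
        exact this
      have hwij : w^i = w^j := sub_eq_zero.mp hwe
      set N := j - i with hN
      have hN0 : N ≠ 0 := by omega
      have hwN : w^N = 1 := by
        have : w^i * w^N = w^i * 1 := by
          rw [mul_one, ← pow_add]
          have : i + N = j := by omega
          rw [this, hwij]
        exact mul_left_cancel₀ (pow_ne_zero i hw0) this
      -- y ^ M = 1 with M = 2^e * N
      set M := 2^e * N with hM
      have hM0 : M ≠ 0 := by positivity
      have hyM : y^M = 1 := by
        rw [hM, pow_mul, ← hwdef, hwN]
      -- reduce to odd order
      set s := M.factorization 2 with hs
      set t := M / 2^s with htt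
      have hst : 2^s * t = M := Nat.ordProj_mul_ordCompl_eq_self M 2
      have htodd : ¬ (2 ∣ t) := Nat.not_dvd_ordCompl Nat.prime_two hM0
      have ht0 : t ≠ 0 := by
        intro h0; rw [h0, mul_zero] at hst; exact hM0 hst.symm
      have hsqrt : ∀ (s' : ℕ) (z : D), z^(2^s') = 1 → z = 1 := by
        intro s'
        induction s' with
        | zero => intro z hz; rwa [pow_zero, pow_one] at hz
        | succ k ih =>
          intro z hz
          have : (z^2)^(2^k) = 1 := by
            rw [← pow_mul, ← pow_succ']
            exact hz
          have hz2 : z^2 = 1 := ih _ this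
          have : (1 + z) * (1 + z) = 0 := by
            have e9 : (1 + z)*(1 + z) = 1 + (z + z) + z*z := by noncomm_ring
            rw [e9, h2, add_zero, ← pow_two, hz2, h2]
          have h1z : (1 : D) + z = 0 := mul_self_eq_zero.mp this
          have := hadd_eq 1 z (h1z)
          exact this.symm
      have hyt : y^t = 1 := by
        apply hsqrt s
        rw [← pow_mul]
        rw [show t * 2^s = 2^s * t by ring, hst]
        exact hyM
      obtain ⟨p, hp⟩ : ∃ p, t = 2*p + 1 := ⟨t/2, by omega⟩
      have : (y^(p+1))^2 = y := by
        rw [← pow_mul]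
        have : (p+1) * 2 = t + 1 := by omega
        rw [this, pow_succ, hyt, one_mul]
      have : f y = 0 := by rw [← this]; exact hsq _
      exact hfy this
    obtain ⟨i, j, hij, hroots⟩ := Finite.exists_ne_map_eq_of_infinite (fun k : ℕ => (AdjoinRoot.root q)^k)
    rcases lt_or_gt_of_ne hij with hlt | hlt
    · exact main i j hlt hroots
    · exact main j i hlt hroots.symm
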